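/- For every prime p, A₂(p) = 2 + τ(p + 1), where τ denotes the number-of-divisors function. -/

import Mathlib

/-- `A2 n` is the number of positive integers `a` such that `a/n` can be written as a
sum of two unit fractions. -/
noncomputable def A2 (n : ℕ) : ℕ :=
  Set.ncard {a : ℕ | 0 < a ∧ ∃ m1 m2 : ℕ, 0 < m1 ∧ 0 < m2 ∧
    (a : ℚ) / (n : ℚ) = 1 / (m1 : ℚ) + 1 / (m2 : ℚ)}

/-- Classification in the case `p ∣ m1`. -/
lemma case_dvd (p a t m2 : ℕ) (hp : p.Prime) (ha : 0 < a) (ht : 0 < t) (hm2 : 0 < m2)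
    (h : a * t * m2 = p * t + m2) : a = p ∨ a ∣ p + 1 := by
  have hpt : 0 < p * t := Nat.mul_pos hp.pos ht
  have hk : 2 ≤ a * t := by
    by_contra hlt
    push_neg at hlt
    have h1 : a * t = 1 := by
      have : 0 < a * t := Nat.mul_pos ha ht
      omega
    rw [h1, one_mul] at h
    omega
  obtain ⟨d, hd⟩ : ∃ d, a * t = d + 1 := ⟨a * t - 1, by omega⟩
  have hd1 : 1 ≤ d := by omega
  have h3 : d * m2 + m2 = p * t + m2 := by
    have : (d + 1) * m2 = p * t + m2 := by rw [← hd]; exact h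
    rw [← this]; ring
  have heq : m2 * d = p * t := by
    have := Nat.add_right_cancel h3
    rw [mul_comm]; exact this
  have hcop : Nat.Coprime d t := by
    have h1 : Nat.Coprime (d + 1) d := by
      simp [Nat.Coprime, Nat.add_comm, Nat.succ_sub_one, Nat.gcd_add_self_left]
    have h2 : t ∣ d + 1 := ⟨a, by rw [← hd]; ring⟩
    exact ((Nat.Coprime.coprime_dvd_left h2 h1)).symm
  have hdp : d ∣ p := by
    refine (Nat.Coprime.dvd_of_dvd_mul_right hcop) ⟨m2, ?_⟩
    rw [← heq]; ring
  rcases (Nat.dvd_prime hp).mp hdp with h1 | h1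
  · -- d = 1, a * t = 2
    have hat : a * t = 2 := by rw [hd, h1]
    have hadvd : a ∣ 2 := ⟨t, hat.symm⟩
    rcases (Nat.dvd_prime Nat.prime_two).mp hadvd with h2 | h2
    · right; rw [h2]; exact one_dvd _
    · rcases hp.eq_two_or_odd' with hp2 | hodd
      · left; omega
      · right
        obtain ⟨k, hk'⟩ := hodd
        exact ⟨k + 1, by rw [h2]; omega⟩
  · right
    have : a * t = p + 1 := by rw [hd, h1]
    exact ⟨t, this.symm⟩

lemma classification (p a m1 m2 : ℕ) (hp : p.Prime) (ha : 0 < a) (hm1 : 0 < m1)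
    (hm2 : 0 < m2) (h : a * m1 * m2 = p * (m1 + m2)) :
    a = p ∨ a = 2 * p ∨ a ∣ p + 1 := by
  by_cases h1 : p ∣ m1
  · obtain ⟨t, rfl⟩ := h1
    have ht : 0 < t := by
      rcases Nat.eq_zero_or_pos t with rfl | h0
      · simp at hm1
      · exact h0
    have h' : a * t * m2 = p * t + m2 := by
      apply Nat.eq_of_mul_eq_mul_left hp.pos
      rw [← h]; ring
    rcases case_dvd p a t m2 hp ha ht hm2 h' with hh | hh
    · exact Or.inl hh
    · exact Or.inr (Or.inr hh)
  by_cases h2 : p ∣ m2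
  · obtain ⟨t, rfl⟩ := h2
    have ht : 0 < t := by
      rcases Nat.eq_zero_or_pos t with rfl | h0
      · simp at hm2
      · exact h0
    have h' : a * t * m1 = p * t + m1 := by
      apply Nat.eq_of_mul_eq_mul_left hp.pos
      calc p * (a * t * m1) = a * m1 * (p * t) := by ring
        _ = p * (m1 + p * t) := h
        _ = p * (p * t + m1) := by ring
    rcases case_dvd p a t m1 hp ha ht hm1 h' with hh | hh
    · exact Or.inl hh
    · exact Or.inr (Or.inr hh)
  · -- p divides a
    have hpa : p ∣ a := by
      have : p ∣ a * m1 * m2 := ⟨m1 + m2, h⟩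
      rcases (Nat.Prime.dvd_mul hp).mp this with hh | hh
      · rcases (Nat.Prime.dvd_mul hp).mp hh with hh2 | hh2
        · exact hh2
        · exact absurd hh2 h1
      · exact absurd hh h2
    obtain ⟨b, rfl⟩ := hpa
    have hb : 0 < b := by
      rcases Nat.eq_zero_or_pos b with rfl | h0
      · simp at ha
      · exact h0
    have h' : b * m1 * m2 = m1 + m2 := by
      apply Nat.eq_of_mul_eq_mul_left hp.pos
      rw [← h]; ring
    have hm12 : m1 = m2 := by
      have e1 : m1 ∣ m1 + m2 := ⟨b * m2, by rw [← h']; ring⟩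
      have e2 : m2 ∣ m1 + m2 := ⟨b * m1, by rw [← h']; ring⟩
      have d1 : m1 ∣ m2 := (Nat.dvd_add_right (dvd_refl m1)).mp e1
      have d2 : m2 ∣ m1 := by
        rw [add_comm] at e2
        exact (Nat.dvd_add_right (dvd_refl m2)).mp e2
      exact Nat.dvd_antisymm d1 d2
    subst hm12
    have h'' : b * m1 * m1 = 2 * m1 := by omega
    have hbm : b * m1 = 2 := Nat.eq_of_mul_eq_mul_right hm1 h''
    have hb2 : b ∣ 2 := ⟨m1, hbm.symm⟩
    rcases (Nat.dvd_prime Nat.prime_two).mp hb2 with hh | hh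
    · left; rw [hh, mul_one]
    · right; left; rw [hh]; ring

theorem A2_prime (p : ℕ) (hp : p.Prime) :
    A2 p = 2 + (p + 1).divisors.card := by
  have hp0 : 0 < p := hp.pos
  have hp1 : 1 < p := hp.one_lt
  have hset : {a : ℕ | 0 < a ∧ ∃ m1 m2 : ℕ, 0 < m1 ∧ 0 < m2 ∧
      (a : ℚ) / (p : ℚ) = 1 / (m1 : ℚ) + 1 / (m2 : ℚ)} =
      ↑(insert p (insert (2*p) (p+1).divisors)) := by
    ext a
    simp only [Finset.coe_insert, Set.mem_insert_iff, Set.mem_setOf_eq, Finset.mem_coe,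
      Nat.mem_divisors]
    constructor
    · rintro ⟨ha, m1, m2, hm1, hm2, heq⟩
      have hq1 : (m1:ℚ) ≠ 0 := Nat.cast_ne_zero.mpr hm1.ne'
      have hq2 : (m2:ℚ) ≠ 0 := Nat.cast_ne_zero.mpr hm2.ne'
      have hq3 : (p:ℚ) ≠ 0 := Nat.cast_ne_zero.mpr hp0.ne'
      have key : a * m1 * m2 = p * (m1 + m2) := by
        have hQ : ((a * m1 * m2 : ℕ) : ℚ) = ((p * (m1 + m2) : ℕ) : ℚ) := by
          push_cast
          field_simp at heq
          linarith [heq]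
        exact_mod_cast hQ
      rcases classification p a m1 m2 hp ha hm1 hm2 key with h | h | h
      · exact Or.inl h
      · exact Or.inr (Or.inl h)
      · exact Or.inr (Or.inr ⟨h, by omega⟩)
    · rintro (h | h | ⟨hdvd, -⟩)
      · refine ⟨by rw [h]; exact hp0, 2, 2, by norm_num, by norm_num, ?_⟩
        have hq3 : (p:ℚ) ≠ 0 := Nat.cast_ne_zero.mpr hp0.ne'
        rw [h, div_self hq3]; norm_num
      · refine ⟨by rw [h]; positivity, 1, 1, one_pos, one_pos, ?_⟩
        have hq3 : (p:ℚ) ≠ 0 := Nat.cast_ne_zero.mpr hp0.ne'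
        rw [h]
        push_cast
        field_simp
        ring
      · -- a ∣ p + 1
        have ha0 : 0 < a := Nat.pos_of_dvd_of_pos hdvd (by omega)
        set t := (p + 1) / a with htdef
        have hat : a * t = p + 1 := Nat.mul_div_cancel' hdvd
        have ht0 : 0 < t := by
          rcases Nat.eq_zero_or_pos t with h0 | h0
          · rw [h0, mul_zero] at hat; omega
          · exact h0
        refine ⟨ha0, p * t, t, by positivity, ht0, ?_⟩
        have hq3 : (p:ℚ) ≠ 0 := Nat.cast_ne_zero.mpr hp0.ne'
        have hqt : (t:ℚ) ≠ 0 := Nat.cast_ne_zero.mpr ht0.ne'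
        have hQ : (a:ℚ) * t = p + 1 := by exact_mod_cast hat
        push_cast
        field_simp
        linear_combination hQ
  rw [A2, hset, Set.ncard_coe_finset]
  have h2p : 2 * p ∉ (p + 1).divisors := by
    simp only [Nat.mem_divisors]
    rintro ⟨hd, -⟩
    have := Nat.le_of_dvd (by omega) hd
    omega
  have hpnot : p ∉ insert (2*p) (p+1).divisors := by
    simp only [Finset.mem_insert, Nat.mem_divisors]
    rintro (h | ⟨hd, -⟩)
    · omega
    · have h1 := (Nat.dvd_add_right (dvd_refl p)).mp hd
      have := Nat.le_of_dvd one_pos h1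
      omega
  rw [Finset.card_insert_of_notMem hpnot, Finset.card_insert_of_notMem h2p]
  omega
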